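/- Let a₁, a₂ be positive integers coprime to a positive integer b. Then 3·s(a₁,b) - 3·s(a₂,b) is an integer if and only if 4b divides (a₁-a₂)(b-1)(b+a₁a₂-1). -/

import Mathlib

/-- The sawtooth function ((x)) = x - ⌊x⌋ - 1/2 for non-integer x, and 0 for integer x. -/
def saw (x : ℚ) : ℚ := if x.den = 1 then 0 else x - ⌊x⌋ - 1/2

/-- The Dedekind sum s(a,b) = Σ_{k=1}^{b-1} ((k/b))((ka/b)). -/
def dedekindSum (a b : ℕ) : ℚ :=
  ∑ k ∈ Finset.range b, saw ((k : ℚ) / b) * saw ((k * a : ℚ) / b)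

/-- I(a,b): the number of inversions of the permutation x ↦ ax mod b on {0,...,b-1}. -/
def inv' (a b : ℕ) : ℕ :=
  (((Finset.range b) ×ˢ (Finset.range b)).filter
    (fun p => p.1 < p.2 ∧ (a * p.2) % b < (a * p.1) % b)).card

namespace ThreeSaw
open Finset

lemma fract_nat_div (n b : ℕ) (hb : 0 < b) :
    Int.fract ((n : ℚ) / b) = ((n % b : ℕ) : ℚ) / b := by
  have hb0 : (b:ℚ) ≠ 0 := Nat.cast_ne_zero.mpr hb.ne'
  have h1 : (n:ℚ)/b = ((n / b : ℕ) : ℤ) + ((n % b : ℕ) : ℚ) / b := by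
    have h2 : (b:ℚ) * ((n/b : ℕ):ℚ) + ((n%b:ℕ):ℚ) = (n:ℚ) := by
      exact_mod_cast Nat.div_add_mod n b
    rw [Int.cast_natCast]
    field_simp
    linarith
  rw [h1, Int.fract_intCast_add, Int.fract_eq_self.mpr ⟨by positivity, by
    rw [div_lt_one (by positivity)]
    exact_mod_cast Nat.mod_lt n hb⟩]

lemma saw_of_not_dvd (n b : ℕ) (hb : 0 < b) (hnd : ¬ b ∣ n) :
    saw ((n : ℚ) / b) = ((n % b : ℕ) : ℚ) / b - 1/2 := by
  have hb0 : (b:ℚ) ≠ 0 := Nat.cast_ne_zero.mpr hb.ne'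
  have hden : ((n:ℚ)/b).den ≠ 1 := by
    intro h
    apply hnd
    set x : ℚ := (n:ℚ)/b with hx
    have hx1 : (x.num : ℚ) = x := by
      conv_rhs => rw [← Rat.num_div_den x, h]
      simp
    have hx2 : (n:ℚ) = (x.num : ℚ) * b := by
      rw [hx1, hx]; field_simp
    have hx3 : (n:ℤ) = x.num * b := by exact_mod_cast hx2
    exact Int.natCast_dvd_natCast.mp ⟨x.num, by rw [hx3, mul_comm]⟩
  rw [saw, if_neg hden, sub_left_inj, Int.self_sub_floor, fract_nat_div n b hb]

lemma sum_perm {M : Type*} [AddCommMonoid M] (a b : ℕ) (hb : 0 < b) (hco : Nat.Coprime a b) (g : ℕ → M) :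
    ∑ k ∈ range b, g ((a*k) % b) = ∑ k ∈ range b, g k := by
  rcases eq_or_lt_of_le (show 1 ≤ b from hb) with h1 | h1
  · have : b = 1 := h1.symm
    subst this
    simp [Nat.mod_one]
  · obtain ⟨c, -, hc⟩ := Nat.exists_mul_mod_eq_one_of_coprime hco h1
    refine Finset.sum_nbij' (fun k => (a*k) % b) (fun k => (c*k) % b) ?_ ?_ ?_ ?_ ?_
    · intro k _; exact mem_range.mpr (Nat.mod_lt _ hb)
    · intro k _; exact mem_range.mpr (Nat.mod_lt _ hb)
    · intro k hk
      show (c * ((a*k) % b)) % b = k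
      have : (c * ((a*k) % b)) % b = ((c*a) * k) % b := by
        rw [Nat.mul_mod_mod, mul_assoc]
      rw [this, ← Nat.mod_mul_mod, mul_comm c a, hc, one_mul,
        Nat.mod_eq_of_lt (mem_range.mp hk)]
    · intro k hk
      show (a * ((c*k) % b)) % b = k
      have : (a * ((c*k) % b)) % b = ((a*c) * k) % b := by
        rw [Nat.mul_mod_mod, mul_assoc]
      rw [this, ← Nat.mod_mul_mod, hc, one_mul, Nat.mod_eq_of_lt (mem_range.mp hk)]
    · intro k _; rfl


lemma ds_eq (a b : ℕ) (hb : 0 < b) (hco : Nat.Coprime a b) :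
    dedekindSum a b
      = ((∑ k ∈ range b, (k * ((a*k)%b)) : ℕ) : ℚ) / b^2 - ((b:ℚ)-1)/4 := by
  have hb0 : (b:ℚ) ≠ 0 := Nat.cast_ne_zero.mpr hb.ne'
  have hg : ∀ k ∈ range b, saw ((k:ℚ)/b) * saw (((k:ℚ) * (a:ℚ)) / b)
      = ((((k * ((a*k)%b) : ℕ)) : ℚ)/b^2 - (k:ℚ)/(2*b) - (((a*k)%b : ℕ):ℚ)/(2*b) + 1/4)
        - (if k = 0 then (1:ℚ)/4 else 0) := by
    intro k hk
    rcases eq_or_ne k 0 with rfl | hk0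
    · norm_num [saw]
    · have hkb := mem_range.mp hk
      have h1 : ¬ b ∣ k := by
        intro h
        have := Nat.le_of_dvd (Nat.pos_of_ne_zero hk0) h
        omega
      have h2 : ¬ b ∣ k * a := by
        intro h
        exact h1 (Nat.Coprime.dvd_of_dvd_mul_right hco.symm h)
      rw [saw_of_not_dvd k b hb h1,
        show ((k:ℚ) * (a:ℚ)) = (((k*a : ℕ)):ℚ) by push_cast; ring,
        saw_of_not_dvd (k*a) b hb h2,
        Nat.mod_eq_of_lt hkb, show (k*a) % b = (a*k) % b by rw [mul_comm]]
      rw [if_neg hk0]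
      push_cast
      field_simp
      ring
  have hK : (∑ k ∈ range b, (k:ℚ)) * 2 = b * ((b:ℚ) - 1) := by
    have h := Finset.sum_range_id_mul_two b
    have h2 : (((∑ i ∈ range b, i) * 2 : ℕ) : ℚ) = ((b * (b-1) : ℕ):ℚ) := by rw [h]
    rw [Nat.cast_mul, Nat.cast_mul, Nat.cast_sub hb, Nat.cast_sum] at h2
    push_cast at h2 ⊢
    linarith
  have hR : (∑ k ∈ range b, (((a*k)%b : ℕ):ℚ)) * 2 = b * ((b:ℚ) - 1) := by
    rw [sum_perm a b hb hco (fun t => ((t:ℕ):ℚ))]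
    exact hK
  rw [dedekindSum, Finset.sum_congr rfl hg, Finset.sum_sub_distrib,
    Finset.sum_ite_eq' (range b) 0 (fun _ => (1:ℚ)/4), if_pos (mem_range.mpr hb)]
  simp only [Finset.sum_add_distrib, Finset.sum_sub_distrib, ← Finset.sum_div,
    Finset.sum_const, card_range, nsmul_eq_mul, Nat.cast_sum]
  push_cast
  have e1 : ∑ k ∈ range b, (k:ℚ) = ((b:ℚ)^2 - b)/2 := by ring_nf; ring_nf at hK; linarith
  have e2 : ∑ k ∈ range b, ((a*k%b : ℕ):ℚ) = ((b:ℚ)^2 - b)/2 := by ring_nf; ring_nf at hR; linarith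
  rw [e1, e2]
  field_simp
  ring


lemma triA (F : ℕ → ℤ) (hF0 : F 0 = 0) (n : ℕ) :
    ∑ j ∈ range n, ∑ k ∈ range n, (if j < k then F (k-j) else 0)
      = ∑ t ∈ range n, ((n:ℤ) - t) * F t := by
  induction n with
  | zero => simp
  | succ n ih =>
    have h1 : ∀ j ∈ range n, ∑ k ∈ range (n+1), (if j < k then F (k-j) else 0)
        = (∑ k ∈ range n, (if j < k then F (k-j) else 0)) + (if j < n then F (n-j) else 0) :=
      fun j _ => Finset.sum_range_succ _ n
    have h2 : ∑ k ∈ range (n+1), (if n < k then F (k-n) else 0) = 0 :=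
      Finset.sum_eq_zero (fun k hk => if_neg (by have := mem_range.mp hk; omega))
    rw [Finset.sum_range_succ, h2, add_zero, Finset.sum_congr rfl h1,
      Finset.sum_add_distrib, ih]
    have h3 : ∑ j ∈ range n, (if j < n then F (n-j) else 0) = ∑ j ∈ range n, F (j+1) := by
      rw [← Finset.sum_range_reflect (fun t => F (t+1)) n]
      refine Finset.sum_congr rfl (fun j hj => ?_)
      have hj' := mem_range.mp hj
      rw [if_pos hj']
      congr 1
      omega
    have h4 : ∑ j ∈ range n, F (j+1) = ∑ j ∈ range (n+1), F j - F 0 := by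
      rw [Finset.sum_range_succ' F n]; ring
    rw [h3, h4, hF0, sub_zero, Finset.sum_range_succ F]
    rw [Finset.sum_range_succ]
    rw [← add_assoc, ← Finset.sum_add_distrib]
    have h5 : ∀ t ∈ range n, ((n:ℤ)-(t:ℤ))*F t + F t = (((n+1:ℕ):ℤ) - (t:ℤ)) * F t :=
      fun t _ => by push_cast; ring
    rw [Finset.sum_congr rfl h5]
    push_cast
    ring

lemma triB (F : ℕ → ℤ) (n : ℕ) :
    ∑ j ∈ range n, ∑ k ∈ range n, (if j < k then F j else 0)
      = ∑ t ∈ range n, ((n:ℤ) - 1 - t) * F t := by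
  induction n with
  | zero => simp
  | succ n ih =>
    have h1 : ∀ j ∈ range n, ∑ k ∈ range (n+1), (if j < k then F j else 0)
        = (∑ k ∈ range n, (if j < k then F j else 0)) + (if j < n then F j else 0) :=
      fun j _ => Finset.sum_range_succ _ n
    have h2 : ∑ k ∈ range (n+1), (if n < k then F n else 0) = 0 :=
      Finset.sum_eq_zero (fun k hk => if_neg (by have := mem_range.mp hk; omega))
    rw [Finset.sum_range_succ, h2, add_zero, Finset.sum_congr rfl h1,
      Finset.sum_add_distrib, ih]
    have h3 : ∀ j ∈ range n, (if j < n then F j else 0) = F j :=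
      fun j hj => if_pos (mem_range.mp hj)
    rw [Finset.sum_congr rfl h3]
    rw [Finset.sum_range_succ]
    rw [← Finset.sum_add_distrib]
    have h5 : ∀ t ∈ range n, ((n:ℤ)-1-(t:ℤ))*F t + F t = (((n+1:ℕ):ℤ) - 1 - (t:ℤ)) * F t :=
      fun t _ => by push_cast; ring
    rw [Finset.sum_congr rfl h5]
    push_cast
    ring

lemma triC (F : ℕ → ℤ) (n : ℕ) :
    ∑ j ∈ range n, ∑ k ∈ range n, (if j < k then F k else 0)
      = ∑ t ∈ range n, (t:ℤ) * F t := by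
  induction n with
  | zero => simp
  | succ n ih =>
    have h1 : ∀ j ∈ range n, ∑ k ∈ range (n+1), (if j < k then F k else 0)
        = (∑ k ∈ range n, (if j < k then F k else 0)) + (if j < n then F n else 0) :=
      fun j _ => Finset.sum_range_succ _ n
    have h2 : ∑ k ∈ range (n+1), (if n < k then F k else 0) = 0 :=
      Finset.sum_eq_zero (fun k hk => if_neg (by have := mem_range.mp hk; omega))
    rw [Finset.sum_range_succ, h2, add_zero, Finset.sum_congr rfl h1,
      Finset.sum_add_distrib, ih]
    have h3 : ∀ j ∈ range n, (if j < n then F n else 0) = F n :=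
      fun j hj => if_pos (mem_range.mp hj)
    rw [Finset.sum_congr rfl h3, Finset.sum_const, card_range]
    rw [Finset.sum_range_succ]
    push_cast [nsmul_eq_mul]
    ring


lemma mod_key (a b j k : ℕ) (hb : 0 < b) (hco : Nat.Coprime a b)
    (hjk : j < k) (hkb : k < b) :
    (if (a*k) % b < (a*j) % b then (b:ℤ) else 0)
      = (((a*(k-j)) % b : ℕ) : ℤ) + (((a*j) % b : ℕ) : ℤ) - (((a*k) % b : ℕ) : ℤ) := by
  set x := (a*j) % b with hx
  set y := (a*(k-j)) % b with hy
  set z := (a*k) % b with hz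
  have hxb : x < b := Nat.mod_lt _ hb
  have hyb : y < b := Nat.mod_lt _ hb
  have hzb : z < b := Nat.mod_lt _ hb
  have hy0 : 0 < y := by
    rcases Nat.eq_zero_or_pos y with h0 | h0
    · exfalso
      have hdvd : b ∣ a*(k-j) := Nat.dvd_of_mod_eq_zero h0
      have : b ∣ (k-j) := Nat.Coprime.dvd_of_dvd_mul_left hco.symm hdvd
      have := Nat.le_of_dvd (by omega) this
      omega
    · exact h0
  have hmod : (x + y) % b = z := by
    rw [hx, hy, ← Nat.add_mod]
    have : a*j + a*(k-j) = a*k := by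
      rw [← Nat.mul_add]
      congr 1
      omega
    rw [this]
  have hd : (b:ℤ) ∣ ((z:ℤ) - ((x:ℤ) + (y:ℤ))) := by
    have hme : (x + y) ≡ z [MOD b] := by
      unfold Nat.ModEq
      rw [hmod, Nat.mod_eq_of_lt hzb]
    have h := hme.dvd
    push_cast at h
    exact_mod_cast h
  obtain ⟨c, hc⟩ := hd
  have hbz : (0:ℤ) < b := by exact_mod_cast hb
  have hxz : (x:ℤ) < b := by exact_mod_cast hxb
  have hyz : (y:ℤ) < b := by exact_mod_cast hyb
  have hzz : (z:ℤ) < b := by exact_mod_cast hzb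
  have hy0z : (0:ℤ) < y := by exact_mod_cast hy0
  have hx0 : (0:ℤ) ≤ x := Int.natCast_nonneg x
  have hz0 : (0:ℤ) ≤ z := Int.natCast_nonneg z
  by_cases hlt : z < x
  · rw [if_pos hlt]
    have hltz : (z:ℤ) < x := by exact_mod_cast hlt
    have hc1 : c = -1 := by
      have h1 : (b:ℤ)*c < 0 := by linarith
      have h2 : -(2*(b:ℤ)) < b*c := by linarith
      have : c < 0 := by
        by_contra h
        push_neg at h
        nlinarith
      have : -2 < c := by
        by_contra h
        push_neg at h
        nlinarith
      omega
    rw [hc1] at hc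
    linarith
  · rw [if_neg hlt]
    push_neg at hlt
    have hltz : (x:ℤ) ≤ z := by exact_mod_cast hlt
    have hc0 : c = 0 := by
      have h1 : -(b:ℤ) < b*c := by linarith
      have h2 : (b:ℤ)*c < b := by linarith
      have : 0 ≤ c := by
        by_contra h
        push_neg at h
        nlinarith
      have : c < 1 := by
        by_contra h
        push_neg at h
        nlinarith
      omega
    rw [hc0] at hc
    linarith


lemma inv_sum (a b : ℕ) (hb : 0 < b) (hco : Nat.Coprime a b) :
    (b:ℤ) * (inv' a b : ℤ)
      = ∑ t ∈ range b, (2*(b:ℤ) - 1 - 3*(t:ℤ)) * (((a*t) % b : ℕ) : ℤ) := by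
  set F : ℕ → ℤ := fun t => (((a*t) % b : ℕ) : ℤ) with hF
  have hF0 : F 0 = 0 := by simp [hF]
  have h1 : ((inv' a b : ℕ) : ℤ) = ∑ j ∈ range b, ∑ k ∈ range b,
      (if (j < k ∧ (a*k) % b < (a*j) % b) then (1:ℤ) else 0) := by
    rw [inv', Finset.card_filter, ← Finset.sum_product']
    push_cast
    rfl
  have h2 : ∀ j ∈ range b, ∀ k ∈ range b,
      (b:ℤ) * (if (j < k ∧ (a*k)%b < (a*j)%b) then (1:ℤ) else 0)
      = ((if j < k then F (k-j) else 0)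
        + (if j < k then F j else 0))
        - (if j < k then F k else 0) := by
    intro j hj k hk
    by_cases hjk : j < k
    · rw [if_pos hjk, if_pos hjk, if_pos hjk]
      have hmk := mod_key a b j k hb hco hjk (mem_range.mp hk)
      by_cases hlt : (a*k)%b < (a*j)%b
      · rw [if_pos (And.intro hjk hlt)]
        rw [if_pos hlt] at hmk
        simp only [hF, mul_one]
        linarith
      · rw [if_neg (fun hcon : _ ∧ _ => hlt hcon.2)]
        rw [if_neg hlt] at hmk
        simp only [hF, mul_zero]
        linarith
    · rw [if_neg (by tauto), if_neg hjk, if_neg hjk, if_neg hjk]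
      ring
  rw [h1, Finset.mul_sum]
  have h3 : ∀ j ∈ range b, (b:ℤ) * ∑ k ∈ range b,
      (if (j < k ∧ (a*k)%b < (a*j)%b) then (1:ℤ) else 0)
      = ∑ k ∈ range b, (((if j < k then F (k-j) else 0)
        + (if j < k then F j else 0))
        - (if j < k then F k else 0)) := by
    intro j hj
    rw [Finset.mul_sum]
    exact Finset.sum_congr rfl (h2 j hj)
  rw [Finset.sum_congr rfl h3]
  simp only [Finset.sum_sub_distrib, Finset.sum_add_distrib]
  rw [triA F hF0 b, triB F b, triC F b, ← Finset.sum_add_distrib, ← Finset.sum_sub_distrib]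
  exact Finset.sum_congr rfl (fun t _ => by simp only [hF]; push_cast; ring)


lemma sum_id_int (n : ℕ) : 2 * ∑ t ∈ range n, (t:ℤ) = n * ((n:ℤ) - 1) := by
  induction n with
  | zero => simp
  | succ n ih =>
    rw [Finset.sum_range_succ, mul_add, ih]
    push_cast
    ring

lemma sum_sq_int (n : ℕ) : 6 * ∑ t ∈ range n, (t:ℤ)^2 = n * ((n:ℤ) - 1) * (2*n - 1) := by
  induction n with
  | zero => simp
  | succ n ih =>
    rw [Finset.sum_range_succ, mul_add, ih]
    push_cast
    ring

lemma T_eq (a b : ℕ) (hb : 0 < b) (hco : Nat.Coprime a b) :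
    3 * ∑ t ∈ range b, (t:ℤ) * (((a*t) % b : ℕ) : ℤ)
      = (2*(b:ℤ)-1) * (∑ t ∈ range b, (t:ℤ)) - (b:ℤ) * (inv' a b : ℤ) := by
  rw [inv_sum a b hb hco]
  have hperm : ∑ t ∈ range b, (((a*t) % b : ℕ) : ℤ) = ∑ t ∈ range b, (t:ℤ) :=
    sum_perm a b hb hco (fun t => (t:ℤ))
  have hexp : ∑ t ∈ range b, (2*(b:ℤ)-1-3*(t:ℤ)) * (((a*t)%b:ℕ):ℤ)
      = (2*(b:ℤ)-1) * (∑ t ∈ range b, (((a*t)%b:ℕ):ℤ))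
        - 3 * ∑ t ∈ range b, (t:ℤ)*(((a*t)%b:ℕ):ℤ) := by
    rw [Finset.mul_sum, Finset.mul_sum, ← Finset.sum_sub_distrib]
    exact Finset.sum_congr rfl (fun t _ => by ring)
  rw [hexp, hperm]
  ring

section Euler

variable (a b : ℕ)

lemma hr_eq (t : ℕ) : (((a*t) % b : ℕ) : ℤ) = (a:ℤ)*t - b*(((a*t)/b : ℕ):ℤ) := by
  have h := Nat.div_add_mod (a*t) b
  have h2 : ((b * (a*t/b) + (a*t) % b : ℕ) : ℤ) = ((a*t : ℕ):ℤ) := by rw [h]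
  push_cast at h2 ⊢
  linarith

lemma euler_id (hb : 0 < b) (hco : Nat.Coprime a b) :
    4*(a:ℤ)*(inv' a b : ℤ) + ((a:ℤ)-1)^2*((b:ℤ)-1)*(2*(b:ℤ)-1)
      = 6*(b:ℤ)*∑ t ∈ range b, (((a*t)/b : ℕ):ℤ)^2 := by
  have hbz : ((b:ℤ)) ≠ 0 := by exact_mod_cast hb.ne'
  apply mul_left_cancel₀ hbz
  have h6 := T_eq a b hb hco
  have hS1 : ∑ t ∈ range b, (t:ℤ) * (((a*t) % b : ℕ) : ℤ)
      = (a:ℤ) * (∑ t ∈ range b, (t:ℤ)^2)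
        - (b:ℤ) * ∑ t ∈ range b, (t:ℤ)*(((a*t)/b : ℕ):ℤ) := by
    rw [Finset.mul_sum, Finset.mul_sum, ← Finset.sum_sub_distrib]
    exact Finset.sum_congr rfl (fun t _ => by linear_combination (t:ℤ) * hr_eq a b t)
  have hS2 : ∑ t ∈ range b, (((a*t) % b : ℕ) : ℤ)^2
      = (a:ℤ)^2 * (∑ t ∈ range b, (t:ℤ)^2)
        - 2*(a:ℤ)*(b:ℤ) * (∑ t ∈ range b, (t:ℤ)*(((a*t)/b : ℕ):ℤ))
        + (b:ℤ)^2 * ∑ t ∈ range b, (((a*t)/b : ℕ):ℤ)^2 := by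
    have hpt : ∀ t ∈ range b, (((a*t) % b : ℕ) : ℤ)^2
        = (a:ℤ)^2*(t:ℤ)^2 - 2*(a:ℤ)*(b:ℤ)*((t:ℤ)*(((a*t)/b : ℕ):ℤ))
          + (b:ℤ)^2*((((a*t)/b : ℕ):ℤ))^2 := by
      intro t _
      linear_combination ((((a*t) % b : ℕ) : ℤ) + (a:ℤ)*t - b*(((a*t)/b : ℕ):ℤ)) * hr_eq a b t
    rw [Finset.sum_congr rfl hpt]
    simp only [Finset.sum_add_distrib, Finset.sum_sub_distrib, ← Finset.mul_sum]
  have hp2 : ∑ t ∈ range b, (((a*t) % b : ℕ) : ℤ)^2 = ∑ t ∈ range b, (t:ℤ)^2 :=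
    sum_perm a b hb hco (fun t => (t:ℤ)^2)
  have hK := sum_id_int b
  have hK2 := sum_sq_int b
  linear_combination (4*(a:ℤ))*h6 + (-12*(a:ℤ))*hS1 + 6*hS2 + (-6)*hp2
    + (2*(a:ℤ)*(2*(b:ℤ)-1))*hK + (-((a:ℤ)^2+1))*hK2

lemma sq_sum_id (hb : 0 < b) (hco : Nat.Coprime a b) :
    2 * ∑ t ∈ range b, (((a*t)/b : ℕ):ℤ) = ((a:ℤ)-1)*((b:ℤ)-1) := by
  have hbz : ((b:ℤ)) ≠ 0 := by exact_mod_cast hb.ne'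
  apply mul_left_cancel₀ hbz
  have hsum : ∑ t ∈ range b, (((a*t) % b : ℕ) : ℤ)
      = (a:ℤ) * (∑ t ∈ range b, (t:ℤ))
        - (b:ℤ) * ∑ t ∈ range b, (((a*t)/b : ℕ):ℤ) := by
    rw [Finset.mul_sum, Finset.mul_sum, ← Finset.sum_sub_distrib]
    exact Finset.sum_congr rfl (fun t _ => by linear_combination hr_eq a b t)
  have hperm : ∑ t ∈ range b, (((a*t) % b : ℕ) : ℤ) = ∑ t ∈ range b, (t:ℤ) :=
    sum_perm a b hb hco (fun t => (t:ℤ))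
  have hK := sum_id_int b
  linear_combination 2*hsum + (-2)*hperm + ((a:ℤ)-1)*hK

lemma q_parity :
    (2:ℤ) ∣ (∑ t ∈ range b, (((a*t)/b : ℕ):ℤ)^2) - (∑ t ∈ range b, (((a*t)/b : ℕ):ℤ)) := by
  rw [← Finset.sum_sub_distrib]
  refine Finset.dvd_sum (fun t _ => ?_)
  have h : (((a*t)/b : ℕ):ℤ)^2 - (((a*t)/b : ℕ):ℤ)
      = ((((a*t)/b : ℕ):ℤ) - 1) * ((((a*t)/b : ℕ):ℤ) - 1 + 1) := by ring
  rw [h]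
  exact (Int.even_mul_succ_self _).two_dvd

end Euler


lemma ds_diff (a₁ a₂ b : ℕ) (hb : 0 < b) (h₁ : Nat.Coprime a₁ b) (h₂ : Nat.Coprime a₂ b) :
    3 * dedekindSum a₁ b - 3 * dedekindSum a₂ b
      = ((((inv' a₂ b : ℤ) - (inv' a₁ b : ℤ)) : ℤ) : ℚ) / b := by
  have hb0 : (b:ℚ) ≠ 0 := Nat.cast_ne_zero.mpr hb.ne'
  rw [ds_eq a₁ b hb h₁, ds_eq a₂ b hb h₂]
  have key : 3 * ((∑ k ∈ range b, (k * ((a₁*k)%b)) : ℕ) : ℤ)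
      - 3 * ((∑ k ∈ range b, (k * ((a₂*k)%b)) : ℕ) : ℤ)
      = (b:ℤ) * ((inv' a₂ b : ℤ) - (inv' a₁ b : ℤ)) := by
    have t1 := T_eq a₁ b hb h₁
    have t2 := T_eq a₂ b hb h₂
    have c1 : ((∑ k ∈ range b, (k * ((a₁*k)%b)) : ℕ) : ℤ)
        = ∑ t ∈ range b, (t:ℤ)*(((a₁*t)%b:ℕ):ℤ) := by push_cast; rfl
    have c2 : ((∑ k ∈ range b, (k * ((a₂*k)%b)) : ℕ) : ℤ)
        = ∑ t ∈ range b, (t:ℤ)*(((a₂*t)%b:ℕ):ℤ) := by push_cast; rfl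
    rw [c1, c2]
    linarith
  have keyQ : 3 * (∑ k ∈ range b, (k:ℚ) * (((a₁*k)%b : ℕ):ℚ))
      - 3 * (∑ k ∈ range b, (k:ℚ) * (((a₂*k)%b : ℕ):ℚ))
      = (b:ℚ) * ((inv' a₂ b : ℚ) - (inv' a₁ b : ℚ)) := by exact_mod_cast key
  push_cast
  field_simp
  linear_combination 4 * keyQ


lemma endgame_abstract (A₁ A₂ B B' I₁ I₂ Q₁ Q₂ SQ₁ SQ₂ : ℤ)
    (hBpos : 0 < B)
    (hc₁ : IsCoprime A₁ B) (hc₂ : IsCoprime A₂ B)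
    (hE₁ : 4*A₁*I₁ + (A₁-1)^2*(B-1)*(2*B-1) = 6*B*Q₁)
    (hE₂ : 4*A₂*I₂ + (A₂-1)^2*(B-1)*(2*B-1) = 6*B*Q₂)
    (hSQ₁ : 2*SQ₁ = (A₁-1)*(B-1))
    (hSQ₂ : 2*SQ₂ = (A₂-1)*(B-1))
    (hq₁ : (2:ℤ) ∣ Q₁ - SQ₁) (hq₂ : (2:ℤ) ∣ Q₂ - SQ₂)
    (hpar : Odd B ∨ (B = 2*B' ∧ Odd A₁ ∧ Odd A₂)) :
    (B ∣ I₂ - I₁) ↔ (4*B) ∣ ((A₁-A₂)*(B-1)*(B+A₁*A₂-1)) := by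
  have hB0 : B ≠ 0 := hBpos.ne'
  have hkey : 4*A₁*A₂*(I₂-I₁)
      = (B-1)*(2*B-1)*((A₁-A₂)*(A₁*A₂-1)) + 6*B*(A₁*Q₂-A₂*Q₁) := by
    linear_combination A₁*hE₂ - A₂*hE₁
  have hcopBA : IsCoprime B (A₁*A₂) := hc₁.symm.mul_right hc₂.symm
  rcases hpar with hodd | ⟨hB2, hoa₁, hoa₂⟩
  · -- B odd
    obtain ⟨z, hz⟩ := hodd
    have hcop2B : IsCoprime (2:ℤ) B := ⟨-z, 1, by rw [hz]; ring⟩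
    have hcop4B : IsCoprime (4:ℤ) B := by
      have h := hcop2B.mul_left hcop2B
      norm_num at h
      exact h
    have hstep1 : (B ∣ I₂ - I₁) ↔ B ∣ (A₁-A₂)*(A₁*A₂-1) := by
      constructor
      · intro h
        have h4 : B ∣ 4*A₁*A₂*(I₂-I₁) := Dvd.dvd.mul_left h _
        rw [hkey] at h4
        have h6 : B ∣ 6*B*(A₁*Q₂-A₂*Q₁) := ⟨6*(A₁*Q₂-A₂*Q₁), by ring⟩
        have h5 : B ∣ (B-1)*(2*B-1)*((A₁-A₂)*(A₁*A₂-1)) := by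
          have h7 := dvd_sub h4 h6
          have h8 : (B-1)*(2*B-1)*((A₁-A₂)*(A₁*A₂-1)) + 6*B*(A₁*Q₂-A₂*Q₁)
              - 6*B*(A₁*Q₂-A₂*Q₁) = (B-1)*(2*B-1)*((A₁-A₂)*(A₁*A₂-1)) := by ring
          rwa [h8] at h7
        have h9 : (A₁-A₂)*(A₁*A₂-1)
            = (B-1)*(2*B-1)*((A₁-A₂)*(A₁*A₂-1)) - B*((2*B-3)*((A₁-A₂)*(A₁*A₂-1))) := by
          ring
        rw [h9]
        exact dvd_sub h5 (dvd_mul_right _ _)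
      · intro h
        have h5 : B ∣ (B-1)*(2*B-1)*((A₁-A₂)*(A₁*A₂-1)) := h.mul_left _
        have h6 : B ∣ 6*B*(A₁*Q₂-A₂*Q₁) := ⟨6*(A₁*Q₂-A₂*Q₁), by ring⟩
        have h4 : B ∣ 4*A₁*A₂*(I₂-I₁) := by rw [hkey]; exact dvd_add h5 h6
        have hcop : IsCoprime B (4*(A₁*A₂)) := hcop4B.symm.mul_right hcopBA
        have h7 : 4*A₁*A₂*(I₂-I₁) = (4*(A₁*A₂))*(I₂-I₁) := by ring
        rw [h7] at h4
        exact hcop.dvd_of_dvd_mul_left h4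
    have h4R : (4:ℤ) ∣ (A₁-A₂)*(B-1)*(B+A₁*A₂-1) := by
      rcases Int.even_or_odd A₁ with ⟨x, hx⟩ | ⟨x, hx⟩ <;>
        rcases Int.even_or_odd A₂ with ⟨y, hy⟩ | ⟨y, hy⟩
      · exact ⟨(A₁-A₂)*z*(z+2*(x*y)), by rw [hx, hy, hz]; ring⟩
      · exact ⟨(A₁-A₂)*z*(z+x*(2*y+1)), by rw [hx, hy, hz]; ring⟩
      · exact ⟨(A₁-A₂)*z*(z+(2*x+1)*y), by rw [hx, hy, hz]; ring⟩
      · exact ⟨(x-y)*z*(B+A₁*A₂-1), by rw [hx, hy, hz]; ring⟩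
    have hstep2 : ((4*B) ∣ (A₁-A₂)*(B-1)*(B+A₁*A₂-1)) ↔ B ∣ (A₁-A₂)*(A₁*A₂-1) := by
      constructor
      · intro h
        have hBR : B ∣ (A₁-A₂)*(B-1)*(B+A₁*A₂-1) := (dvd_mul_left B 4).trans h
        have h8 : (A₁-A₂)*(A₁*A₂-1)
            = B*((A₁-A₂)*(B+A₁*A₂-2)) - (A₁-A₂)*(B-1)*(B+A₁*A₂-1) := by ring
        rw [h8]
        exact dvd_sub (dvd_mul_right _ _) hBR
      · intro h
        have hBR : B ∣ (A₁-A₂)*(B-1)*(B+A₁*A₂-1) := by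
          have h8 : (A₁-A₂)*(B-1)*(B+A₁*A₂-1)
              = B*((A₁-A₂)*(B+A₁*A₂-2)) - (A₁-A₂)*(A₁*A₂-1) := by ring
          rw [h8]
          exact dvd_sub (dvd_mul_right _ _) h
        exact hcop4B.mul_dvd h4R hBR
    rw [hstep1, ← hstep2]
  · -- B even, A₁ A₂ odd
    obtain ⟨x, hx⟩ := hoa₁
    obtain ⟨y, hy⟩ := hoa₂
    have hu : A₁ - A₂ = 2*(x - y) := by rw [hx, hy]; ring
    have hw : A₁*A₂ - 1 = 2*(2*x*y + x + y) := by rw [hx, hy]; ring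
    obtain ⟨d₁, hd₁⟩ := hq₁
    obtain ⟨d₂, hd₂⟩ := hq₂
    have hSQd : SQ₂ - SQ₁ = -(x-y)*(B-1) := by
      apply mul_left_cancel₀ (two_ne_zero' ℤ)
      linear_combination hSQ₂ - hSQ₁ - (B-1)*hu
    obtain ⟨g, hg⟩ : ∃ g, A₁*Q₂ - A₂*Q₁ = 2*g - (x-y) :=
      ⟨x*Q₂ - y*Q₁ + d₂ - d₁ + (x-y)*(1 - B'), by
        linear_combination Q₂*hx - Q₁*hy + hd₂ - hd₁ + hSQd - (x-y)*hB2⟩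
    have hM : A₁*A₂*(I₂-I₁)
        = ((x-y)*(2*x*y+x+y)*((B-1)*(2*B-1)) + B'*(x-y)) + B*(3*g - 2*(x-y)) := by
      apply mul_left_cancel₀ (show (4:ℤ) ≠ 0 by norm_num)
      linear_combination hkey + ((B-1)*(2*B-1)*(A₁*A₂-1))*hu
        + ((B-1)*(2*B-1)*2*(x-y))*hw + 6*B*hg + 2*(x-y)*hB2
    have hiff1 : (B ∣ I₂ - I₁) ↔ B ∣ A₁*A₂*(I₂-I₁) :=
      ⟨fun h => h.mul_left _, fun h => hcopBA.dvd_of_dvd_mul_left h⟩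
    have hiff2 : (B ∣ A₁*A₂*(I₂-I₁))
        ↔ B ∣ ((x-y)*(2*x*y+x+y)*((B-1)*(2*B-1)) + B'*(x-y)) := by
      rw [hM]
      constructor
      · intro h
        have h3 := dvd_sub h (dvd_mul_right B (3*g - 2*(x-y)))
        rwa [add_sub_cancel_right] at h3
      · intro h
        exact dvd_add h (dvd_mul_right _ _)
    have hRid : (A₁-A₂)*(B-1)*(B+A₁*A₂-1)
        = 4*((x-y)*(B-1)*(B'+(2*x*y+x+y))) := by
      linear_combination ((B-1)*(B+A₁*A₂-1))*hu + (2*(x-y)*(B-1))*hw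
        + (2*(x-y)*(B-1))*hB2
    have hiff3 : ((4*B) ∣ (A₁-A₂)*(B-1)*(B+A₁*A₂-1))
        ↔ (2*B') ∣ ((x-y)*(B-1)*(B'+(2*x*y+x+y))) := by
      rw [hRid, hB2, show (4:ℤ)*(2*B') = 4*(2*B') from rfl]
      exact mul_dvd_mul_iff_left (by norm_num : (4:ℤ) ≠ 0)
    have hcopB : IsCoprime B (B-1) := ⟨1, -1, by ring⟩
    have hiff4 : (B ∣ ((x-y)*(2*x*y+x+y)*((B-1)*(2*B-1)) + B'*(x-y)))
        ↔ (2*B') ∣ ((x-y)*(B-1)*(B'+(2*x*y+x+y))) := by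
      rw [← hB2]
      constructor
      · intro h
        have h2 : B ∣ (B-1)*((x-y)*(B-1)*(B'+(2*x*y+x+y))) := by
          have h3 : (B-1)*((x-y)*(B-1)*(B'+(2*x*y+x+y)))
              = ((x-y)*(2*x*y+x+y)*((B-1)*(2*B-1)) + B'*(x-y))
                + B*((x-y)*(2*x*y+x+y)*(1-B) + (x-y)*B'*(B-2)) := by ring
          rw [h3]
          exact dvd_add h (dvd_mul_right _ _)
        exact hcopB.dvd_of_dvd_mul_left h2
      · intro h
        have h2 := h.mul_left (B-1)
        have h3 : ((x-y)*(2*x*y+x+y)*((B-1)*(2*B-1)) + B'*(x-y))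
            = (B-1)*((x-y)*(B-1)*(B'+(2*x*y+x+y)))
              - B*((x-y)*(2*x*y+x+y)*(1-B) + (x-y)*B'*(B-2)) := by ring
        rw [h3]
        exact dvd_sub h2 (dvd_mul_right _ _)
    exact (hiff1.trans (hiff2.trans hiff4)).trans hiff3.symm


lemma endgame (a₁ a₂ b : ℕ) (hb : 0 < b) (h₁ : Nat.Coprime a₁ b) (h₂ : Nat.Coprime a₂ b) :
    ((b:ℤ) ∣ ((inv' a₂ b : ℕ) : ℤ) - ((inv' a₁ b : ℕ) : ℤ)) ↔
      (4 * (b:ℤ)) ∣ (((a₁:ℤ) - (a₂:ℤ)) * ((b:ℤ) - 1) * ((b:ℤ) + (a₁:ℤ) * (a₂:ℤ) - 1)) := by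
  have hBpos : (0:ℤ) < b := by exact_mod_cast hb
  have hc₁ : IsCoprime ((a₁:ℤ)) ((b:ℤ)) := Nat.isCoprime_iff_coprime.mpr h₁
  have hc₂ : IsCoprime ((a₂:ℤ)) ((b:ℤ)) := Nat.isCoprime_iff_coprime.mpr h₂
  have hE₁ := euler_id a₁ b hb h₁
  have hE₂ := euler_id a₂ b hb h₂
  have hSQ₁ := sq_sum_id a₁ b hb h₁
  have hSQ₂ := sq_sum_id a₂ b hb h₂
  have hq₁ := q_parity a₁ b
  have hq₂ := q_parity a₂ b
  rcases Nat.even_or_odd b with hbe | hbo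
  · obtain ⟨b', hb'⟩ := hbe
    have hB2 : (b:ℤ) = 2*(b':ℤ) := by
      have : b = 2*b' := by omega
      exact_mod_cast this
    have hodd : ∀ a : ℕ, Nat.Coprime a b → Odd (a:ℤ) := by
      intro a ha
      rw [Int.odd_coe_nat]
      rcases Nat.even_or_odd a with he | ho
      · exfalso
        obtain ⟨t, ht⟩ := he
        have h2a : 2 ∣ a := ⟨t, by omega⟩
        have h2b : 2 ∣ b := ⟨b', by omega⟩
        have hg := Nat.dvd_gcd h2a h2b
        rw [Nat.Coprime] at ha
        omega
      · exact ho
    exact endgame_abstract _ _ _ (b':ℤ) _ _ _ _ _ _ hBpos hc₁ hc₂ hE₁ hE₂ hSQ₁ hSQ₂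
      hq₁ hq₂ (Or.inr ⟨hB2, hodd a₁ h₁, hodd a₂ h₂⟩)
  · have hOB : Odd (b:ℤ) := by rw [Int.odd_coe_nat]; exact hbo
    exact endgame_abstract _ _ _ 0 _ _ _ _ _ _ hBpos hc₁ hc₂ hE₁ hE₂ hSQ₁ hSQ₂
      hq₁ hq₂ (Or.inl hOB)

end ThreeSaw

theorem three_int_iff_dvd (a₁ a₂ b : ℕ) (ha₁ : 0 < a₁) (ha₂ : 0 < a₂) (hb : 0 < b)
    (h₁ : Nat.Coprime a₁ b) (h₂ : Nat.Coprime a₂ b) :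
    (∃ n : ℤ, 3 * dedekindSum a₁ b - 3 * dedekindSum a₂ b = n) ↔
      (4 * b : ℤ) ∣ ((a₁ : ℤ) - a₂) * ((b : ℤ) - 1) * ((b : ℤ) + (a₁ : ℤ) * a₂ - 1) := by
  have hb0 : (b:ℚ) ≠ 0 := Nat.cast_ne_zero.mpr hb.ne'
  rw [ThreeSaw.ds_diff a₁ a₂ b hb h₁ h₂, ← ThreeSaw.endgame a₁ a₂ b hb h₁ h₂]
  constructor
  · rintro ⟨n, hn⟩
    have h2 : (((((inv' a₂ b : ℕ) : ℤ) - ((inv' a₁ b : ℕ) : ℤ)) : ℤ) : ℚ) = (n:ℚ) * (b:ℚ) :=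
      (div_eq_iff hb0).mp hn
    have h3 : ((inv' a₂ b : ℕ) : ℤ) - ((inv' a₁ b : ℕ) : ℤ) = n * b := by exact_mod_cast h2
    exact ⟨n, by linarith⟩
  · rintro ⟨n, hn⟩
    refine ⟨n, ?_⟩
    rw [hn]
    push_cast
    field_simp
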